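/- Let S be a set, G : S × S → ℝ ∪ {∞} a function, cr the associated cross ratio cr(x,y,z,w) = −G(x,y) − G(z,w) + G(x,w) + G(z,y) (defined whenever at most the terms entering with negative sign are infinite, with conventions as in the paper), and say x op y iff G(x,y) < ∞. Let f : S → S' be a map to another set with Gromov product G' and cross ratio cr', such that cr(x,y,z,w) = cr'(f(x),f(y),f(z),f(w)) whenever defined. Assume op and op' satisfy: for all x, y ∈ S there exists z with z op x and z op y (and similarly in S'), and for all x ≠ y there exists a with a op x and ¬(a op y). Then f is injective. -/
import Mathlib


/-- Moebius maps are injective.  Here `G : S × S → ℝ ∪ {∞}` (valued in `EReal`, never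
`−∞`) is a Gromov product, `x op y` iff `G x y < ∞ = ⊤`, and the cross ratio is
`cr(x,y,z,w) = G(x,w) + G(z,y) − G(x,y) − G(z,w)`, defined whenever at most the
negatively-signed terms are infinite, i.e. `G x w ≠ ⊤` and `G z y ≠ ⊤`.  Assume:
`f` preserves the cross ratio whenever defined; any two elements admit a common
opposite (on both sides); and distinct elements are separated by opposition.  Then `f`
is injective. -/
theorem moebius_map_injective {S S' : Type*}
    (G : S → S → EReal) (G' : S' → S' → EReal)
    (hG : ∀ x y, G x y ≠ ⊥) (hG' : ∀ x y, G' x y ≠ ⊥)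
    (f : S → S')
    (hpres : ∀ x y z w : S, G x w ≠ ⊤ → G z y ≠ ⊤ →
      G x w + G z y - G x y - G z w
        = G' (f x) (f w) + G' (f z) (f y) - G' (f x) (f y) - G' (f z) (f w))
    (hjoin : ∀ x y : S, ∃ z : S, G z x ≠ ⊤ ∧ G z y ≠ ⊤)
    (hjoin' : ∀ x y : S', ∃ z : S', G' z x ≠ ⊤ ∧ G' z y ≠ ⊤)
    (hsep : ∀ x y : S, x ≠ y → ∃ a : S, G a x ≠ ⊤ ∧ G a y = ⊤) :
    Function.Injective f := by
  intro x y hxy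
  by_contra hne
  obtain ⟨a, hax, hay⟩ := hsep x y hne
  obtain ⟨p, hpy, hpx⟩ := hjoin y x
  have h1 := hpres p x a y hpy hax
  have h2 := hpres p x a x hpx hax
  rw [← hxy] at h1
  have key : G p y + G a x - G p x - G a y = G p x + G a x - G p x - G a x := by
    rw [h1, h2]
  rw [hay] at key
  rw [EReal.sub_top] at key
  lift G p x to ℝ using ⟨hpx, hG p x⟩ with gpx
  lift G a x to ℝ using ⟨hax, hG a x⟩ with gax
  rw [← EReal.coe_add, ← EReal.coe_sub, ← EReal.coe_sub] at key
  exact EReal.coe_ne_bot _ key.symm
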